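/- Let M be a feasible envy-free matching in an HRLQ instance G. Define the HR instance G' on the unmatched residents and under-subscribed hospitals, where (r,h) ∈ E' iff h prefers r to its threshold resident, with capacities q⁺(h) − |M(h)|. If M_s is a stable matching in G', then M ∪ M_s is a maximum-size envy-free matching among all envy-free matchings of G containing M. -/

import Mathlib

/-- An HRLQ instance: bipartite graph on residents `R` and hospitals `H` with
strict preferences encoded as rank functions (lower rank = more preferred)
and lower/upper quotas per hospital. -/
structure HRLQ (R H : Type) where
  E : R → H → Prop
  rPref : R → H → ℕ
  hPref : H → R → ℕ
  lq : H → ℕ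
  uq : H → ℕ

namespace HRLQ

variable {R H : Type}

/-- residents matched to hospital `h` -/
def matchedTo (M : R → Option H) (h : H) : Set R := {r | M r = some h}

/-- size of a matching -/
noncomputable def msize (M : R → Option H) : ℕ := {r | M r ≠ none}.ncard

variable (I : HRLQ R H)

/-- resident `r` strictly prefers hospital `h` to assignment `o`
    (being unmatched is least preferred); `h` must be acceptable to `r`. -/
def PrefersH (r : R) (h : H) (o : Option H) : Prop :=
  I.E r h ∧ ∀ h', o = some h' → I.rPref r h < I.rPref r h'

def IsMatching (M : R → Option H) : Prop :=
  (∀ r h, M r = some h → I.E r h) ∧ ∀ h, (matchedTo M h).ncard ≤ I.uq h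

def Feasible (M : R → Option H) : Prop :=
  ∀ h, I.lq h ≤ (matchedTo M h).ncard

def Blocks (M : R → Option H) (r : R) (h : H) : Prop :=
  I.E r h ∧ M r ≠ some h ∧ I.PrefersH r h (M r) ∧
    ((matchedTo M h).ncard < I.uq h ∨ ∃ r' ∈ matchedTo M h, I.hPref h r < I.hPref h r')

def Stable (M : R → Option H) : Prop := ∀ r h, ¬ I.Blocks M r h

def Envies (M : R → Option H) (r r' : R) : Prop :=
  ∃ h, M r' = some h ∧ I.PrefersH r h (M r) ∧ I.hPref h r < I.hPref h r'

def EnvyFree (M : R → Option H) : Prop := ∀ r r', ¬ I.Envies M r r'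

def RelaxedStable (M : R → Option H) : Prop :=
  (∀ h, {r | r ∈ matchedTo M h ∧ ∃ h', I.Blocks M r h'}.ncard ≤ I.lq h) ∧
  ∀ r, M r = none → ∀ h, ¬ I.Blocks M r h

/-- preferences are strict -/
def StrictPrefs : Prop :=
  (∀ r, Function.Injective (I.rPref r)) ∧ ∀ h, Function.Injective (I.hPref h)

end HRLQ

private lemma ncard_filter_eq {R : Type} [Fintype R] (p : R → Prop) [DecidablePred p] :
    {r | p r}.ncard = (Finset.univ.filter p).card := by
  rw [← Set.ncard_coe_finset]
  congr 1
  ext r; simp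

/-- Extending a feasible envy-free matching M: build the HR instance G' on the
M-unmatched residents and M-under-subscribed hospitals, with (r,h) ∈ E' iff h
prefers r to its threshold resident, and capacities q⁺(h) − |M(h)|.  If Mₛ is a
stable matching of G', then M ∪ Mₛ is a maximum-size envy-free matching among all
envy-free matchings of G containing M. -/
theorem extension_by_stable_is_maximum_containing
    {R H : Type} [Fintype R] [Fintype H] (I : HRLQ R H)
    (hstrict : I.StrictPrefs)
    (M : R → Option H) (hM : I.IsMatching M ∧ I.Feasible M ∧ I.EnvyFree M)
    -- the edge set of the reduced HR instance G'
    (E' : R → H → Prop)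
    (hE' : ∀ r h, E' r h ↔
      (M r = none ∧ (HRLQ.matchedTo M h).ncard < I.uq h ∧ I.E r h ∧
        -- h prefers r to its threshold resident (dummy resident if none exists)
        ∀ r', M r' ≠ none → I.PrefersH r' h (M r') → I.hPref h r < I.hPref h r'))
    (Ms : R → Option H)
    -- Mₛ is a matching of G' respecting its residual capacities
    (hMs₁ : ∀ r h, Ms r = some h → E' r h)
    (hMs₂ : ∀ h, (HRLQ.matchedTo Ms h).ncard + (HRLQ.matchedTo M h).ncard ≤ I.uq h)
    -- Mₛ is stable in G'
    (hMs₃ : ∀ r h, E' r h → Ms r ≠ some h →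
      (∀ h', Ms r = some h' → I.rPref r h < I.rPref r h') →
      ¬ ((HRLQ.matchedTo Ms h).ncard + (HRLQ.matchedTo M h).ncard < I.uq h ∨
         ∃ r', Ms r' = some h ∧ I.hPref h r < I.hPref h r')) :
    -- then M ∪ Mₛ is a maximum-size envy-free matching containing M
    let N : R → Option H := fun r => match M r with | some h => some h | none => Ms r
    I.IsMatching N ∧ I.EnvyFree N ∧ (∀ r h, M r = some h → N r = some h) ∧
    ∀ M', I.IsMatching M' → I.EnvyFree M' → (∀ r h, M r = some h → M' r = some h) →
      HRLQ.msize M' ≤ HRLQ.msize N := by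
  classical
  obtain ⟨⟨hMedge, hMcap⟩, hMfeas, hMef⟩ := hM
  obtain ⟨hrinj, hhinj⟩ := hstrict
  intro N
  have hN1 : ∀ r h, M r = some h → N r = some h := by
    intro r h hr; show (match M r with | some h => some h | none => Ms r) = some h
    rw [hr]
  have hN2 : ∀ r, M r = none → N r = Ms r := by
    intro r hr; show (match M r with | some h => some h | none => Ms r) = Ms r
    rw [hr]
  have hNcases : ∀ r h, N r = some h → M r = some h ∨ (M r = none ∧ Ms r = some h) := by
    intro r h hr
    cases hMr : M r with
    | some h' =>
      left; rw [hN1 r h' hMr] at hr; exact hr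
    | none => right; exact ⟨rfl, by rwa [hN2 r hMr] at hr⟩
  have hMsnone : ∀ r h, Ms r = some h → M r = none := fun r h hr =>
    ((hE' r h).mp (hMs₁ r h hr)).1
  -- N is a matching
  have hNmatch : I.IsMatching N := by
    constructor
    · intro r h hr
      rcases hNcases r h hr with h1 | ⟨_, h2⟩
      · exact hMedge r h h1
      · exact ((hE' r h).mp (hMs₁ r h h2)).2.2.1
    · intro h
      calc (HRLQ.matchedTo N h).ncard
          ≤ (HRLQ.matchedTo Ms h ∪ HRLQ.matchedTo M h).ncard := by
            apply Set.ncard_le_ncard _ (Set.toFinite _)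
            intro r hr
            rcases hNcases r h hr with h1 | ⟨_, h2⟩
            · exact Or.inr h1
            · exact Or.inl h2
        _ ≤ (HRLQ.matchedTo Ms h).ncard + (HRLQ.matchedTo M h).ncard :=
            Set.ncard_union_le _ _
        _ ≤ I.uq h := hMs₂ h
  -- N is envy-free
  have hNef : I.EnvyFree N := by
    rintro r r' ⟨h, hNr', ⟨hEr, hlt⟩, hrank⟩
    rcases hNcases r' h hNr' with hMr' | ⟨hMr', hMsr'⟩
    · exact hMef r r' ⟨h, hMr', ⟨hEr, fun h' hh' => hlt h' (hN1 r h' hh')⟩, hrank⟩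
    · obtain ⟨_, hunder, hEr'h, hthresh⟩ := (hE' r' h).mp (hMs₁ r' h hMsr')
      cases hMr : M r with
      | some h0 =>
        have hpM : I.PrefersH r h (M r) :=
          ⟨hEr, fun h' hh' => hlt h' (hN1 r h' hh')⟩
        exact lt_asymm hrank (hthresh r (by rw [hMr]; simp) hpM)
      | none =>
        have hNr : N r = Ms r := hN2 r hMr
        have hE'rh : E' r h := (hE' r h).mpr
          ⟨hMr, hunder, hEr, fun r'' h1 h2 => lt_trans hrank (hthresh r'' h1 h2)⟩
        have hMsr : Ms r ≠ some h := by
          intro hc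
          exact lt_irrefl _ (hlt h (by rw [hNr, hc]))
        exact hMs₃ r h hE'rh hMsr (fun h' hh' => hlt h' (by rw [hNr, hh']))
          (Or.inr ⟨r', hMsr', hrank⟩)
  refine ⟨hNmatch, hNef, hN1, ?_⟩
  -- maximality
  intro M' hM'm hM'ef hcont
  obtain ⟨hM'edge, hM'cap⟩ := hM'm
  -- key claim : every M-unmatched, M'-matched resident is Ms-matched
  have key : ∀ r, M r = none → M' r ≠ none → Ms r ≠ none := by
    intro r₀ hr₀M hr₀M' hr₀Ms
    -- the set of "needers"
    set pS : R → Prop := fun r => M r = none ∧ ∃ h, M' r = some h ∧ Ms r ≠ some h ∧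
      ∀ h', Ms r = some h' → I.rPref r h < I.rPref r h' with hpS
    set S : Finset R := Finset.univ.filter pS with hSdef
    set A : Finset R := Finset.univ.filter
      (fun r => M r = none ∧ M' r ≠ none ∧ Ms r = none) with hAdef
    set meF : H → Finset R := fun h =>
      Finset.univ.filter (fun r => M r = none ∧ M' r = some h) with hmeF
    set msF : H → Finset R := fun h =>
      Finset.univ.filter (fun r => Ms r = some h) with hmsF
    set mF : H → Finset R := fun h =>
      Finset.univ.filter (fun r => M r = some h) with hmF
    set Hs : Finset H := Finset.univ.filter (fun h => ∃ r, pS r ∧ M' r = some h) with hHs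
    have hAS : A ⊆ S := by
      intro r hr
      simp only [hAdef, hSdef, Finset.mem_filter, Finset.mem_univ, true_and] at hr ⊢
      obtain ⟨h1, h2, h3⟩ := hr
      obtain ⟨h, hh⟩ := Option.ne_none_iff_exists'.mp h2
      refine ⟨h1, h, hh, by simp [h3], fun h' hc => by rw [h3] at hc; exact absurd hc (by simp)⟩
    -- stability consequences for each needer
    have hstab : ∀ r h, pS r → M' r = some h →
        (I.uq h ≤ (msF h).card + (mF h).card ∧
         ∀ r', Ms r' = some h → I.hPref h r' < I.hPref h r) := by
      intro r h hr hrh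
      obtain ⟨hrM, h₀, hrh₀, hMsne, hMspref⟩ := hr
      have hh₀ : h₀ = h := Option.some.inj (hrh₀.symm.trans hrh)
      rw [hh₀] at hMsne hMspref
      -- E' r h holds
      have hE'rh : E' r h := by
        rw [hE']
        refine ⟨hrM, ?_, hM'edge r h hrh, ?_⟩
        · -- |M(h)| < uq h
          have hsub : HRLQ.matchedTo M h ⊆ HRLQ.matchedTo M' h := fun x hx => hcont x h hx
          have hss : HRLQ.matchedTo M h ⊂ HRLQ.matchedTo M' h :=
            (Set.ssubset_iff_of_subset hsub).mpr
              ⟨r, hrh, by simp [HRLQ.matchedTo, hrM]⟩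
          exact lt_of_lt_of_le (Set.ncard_lt_ncard hss (Set.toFinite _)) (hM'cap h)
        · -- threshold condition
          intro r'' hr''ne ⟨hEr'', hp⟩
          obtain ⟨h₂, hh₂⟩ := Option.ne_none_iff_exists'.mp hr''ne
          have hM'r'' : M' r'' = some h₂ := hcont r'' h₂ hh₂
          have hne : I.hPref h r ≠ I.hPref h r'' := by
            intro hc
            have := hhinj h hc
            rw [← this] at hh₂; rw [hrM] at hh₂; exact absurd hh₂ (by simp)
          have : ¬ I.hPref h r'' < I.hPref h r := by
            intro hc
            exact hM'ef r'' r ⟨h, hrh,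
              ⟨hEr'', fun h' hh' => by
                rw [hM'r''] at hh'; injection hh' with hh''; rw [← hh'']
                exact hp h₂ hh₂⟩, hc⟩
          omega
      have := hMs₃ r h hE'rh hMsne hMspref
      push_neg at this
      obtain ⟨h1, h2⟩ := this
      constructor
      · have e1 : (HRLQ.matchedTo Ms h).ncard = (msF h).card := ncard_filter_eq _
        have e2 : (HRLQ.matchedTo M h).ncard = (mF h).card := ncard_filter_eq _
        rw [e1, e2] at h1; omega
      · intro r' hr'
        have hle := h2 r' hr'
        have hne : I.hPref h r' ≠ I.hPref h r := by
          intro hc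
          have := hhinj h hc
          rw [this] at hr'; exact hMsne hr'
        omega
    -- every element of msF h \ meF h (h needed) is in S \ A
    have hmem3 : ∀ h ∈ Hs, ∀ r' ∈ msF h \ meF h, r' ∈ S \ A := by
      intro h hh r' hr'
      simp only [hHs, Finset.mem_filter, Finset.mem_univ, true_and] at hh
      obtain ⟨r, hrS, hrh⟩ := hh
      simp only [Finset.mem_sdiff, hmsF, hmeF, Finset.mem_filter, Finset.mem_univ,
        true_and] at hr'
      obtain ⟨hMsr', hnot⟩ := hr'
      have hMr' : M r' = none := hMsnone r' h hMsr'
      have hM'ne : M' r' ≠ some h := fun hc => hnot ⟨hMr', hc⟩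
      have hpref : I.hPref h r' < I.hPref h r := (hstab r h hrS hrh).2 r' hMsr'
      have hEr' : I.E r' h := ((hE' r' h).mp (hMs₁ r' h hMsr')).2.2.1
      -- r' does not envy r in M', hence M' r' = some h'' preferred to h
      have hnenvy := hM'ef r' r
      have hex : ∃ h'', M' r' = some h'' ∧ I.rPref r' h'' ≤ I.rPref r' h := by
        by_contra hc
        push_neg at hc
        exact hnenvy ⟨h, hrh, ⟨hEr', fun h'' e => hc h'' e⟩, hpref⟩
      obtain ⟨h'', hM'r'', hle⟩ := hex
      have hne : h'' ≠ h := fun hc => hM'ne (hc ▸ hM'r'')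
      have hlt : I.rPref r' h'' < I.rPref r' h :=
        lt_of_le_of_ne hle (fun hc => hne (hrinj r' hc))
      have hr'S : r' ∈ S := by
        simp only [hSdef, Finset.mem_filter, Finset.mem_univ, true_and, hpS]
        refine ⟨hMr', h'', hM'r'', ?_, ?_⟩
        · rw [hMsr']; intro hc; injection hc with hc; exact hne hc.symm
        · intro h₀ hc; rw [hMsr'] at hc; injection hc with hc; rw [← hc]; exact hlt
      refine Finset.mem_sdiff.mpr ⟨hr'S, ?_⟩
      simp only [hAdef, Finset.mem_filter, Finset.mem_univ, true_and]
      intro hc; rw [hMsr'] at hc; exact absurd hc.2.2 (by simp)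
    -- counting
    have e1 : S.card ≤ ∑ h ∈ Hs, (meF h \ msF h).card := by
      calc S.card ≤ (Hs.biUnion (fun h => meF h \ msF h)).card := by
            apply Finset.card_le_card
            intro r hr
            simp only [hSdef, Finset.mem_filter, Finset.mem_univ, true_and] at hr
            obtain ⟨hrM, h, hrh, hMsne, _⟩ := hr
            apply Finset.mem_biUnion.mpr
            refine ⟨h, ?_, ?_⟩
            · simp only [hHs, Finset.mem_filter, Finset.mem_univ, true_and]
              refine ⟨r, ?_, hrh⟩
              simp only [hSdef, Finset.mem_filter, Finset.mem_univ, true_and] at *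
              exact ⟨hrM, h, hrh, hMsne, by tauto⟩
            · simp only [Finset.mem_sdiff, hmeF, hmsF, Finset.mem_filter,
                Finset.mem_univ, true_and]
              exact ⟨⟨hrM, hrh⟩, hMsne⟩
        _ ≤ ∑ h ∈ Hs, (meF h \ msF h).card := Finset.card_biUnion_le
    have e2 : ∀ h ∈ Hs, (meF h \ msF h).card ≤ (msF h \ meF h).card := by
      intro h hh
      simp only [hHs, Finset.mem_filter, Finset.mem_univ, true_and] at hh
      obtain ⟨r, hrS, hrh⟩ := hh
      have hfull := (hstab r h hrS hrh).1
      -- (meF h).card + (mF h).card ≤ uq h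
      have hcap : (meF h).card + (mF h).card ≤ I.uq h := by
        have hdisj : Disjoint (meF h) (mF h) := by
          rw [Finset.disjoint_left]
          intro a ha hb
          simp only [hmeF, hmF, Finset.mem_filter, Finset.mem_univ, true_and] at ha hb
          rw [ha.1] at hb; exact absurd hb (by simp)
        have hsub : meF h ∪ mF h ⊆ Finset.univ.filter (fun r => M' r = some h) := by
          intro a ha
          rcases Finset.mem_union.mp ha with ha | ha <;>
            simp only [hmeF, hmF, Finset.mem_filter, Finset.mem_univ, true_and] at ha ⊢
          · exact ha.2
          · exact hcont a h ha
        calc (meF h).card + (mF h).card = (meF h ∪ mF h).card :=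
              (Finset.card_union_of_disjoint hdisj).symm
          _ ≤ (Finset.univ.filter (fun r => M' r = some h)).card := Finset.card_le_card hsub
          _ = (HRLQ.matchedTo M' h).ncard := (ncard_filter_eq _).symm
          _ ≤ I.uq h := hM'cap h
      have hle : (meF h).card ≤ (msF h).card := by omega
      have i1 := Finset.card_inter_add_card_sdiff (meF h) (msF h)
      have i2 := Finset.card_inter_add_card_sdiff (msF h) (meF h)
      rw [Finset.inter_comm] at i2
      omega
    have e3 : ∑ h ∈ Hs, (msF h \ meF h).card = (Hs.biUnion (fun h => msF h \ meF h)).card := by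
      rw [Finset.card_biUnion]
      intro x hx y hy hxy
      rw [Function.onFun, Finset.disjoint_left]
      intro a ha hb
      simp only [Finset.mem_sdiff, hmsF, Finset.mem_filter, Finset.mem_univ, true_and] at ha hb
      rw [ha.1] at hb
      exact hxy (by injection hb.1)
    have e4 : (Hs.biUnion (fun h => msF h \ meF h)).card ≤ (S \ A).card := by
      apply Finset.card_le_card
      intro r hr
      obtain ⟨h, hh, hr⟩ := Finset.mem_biUnion.mp hr
      exact hmem3 h hh r hr
    have e5 : (S \ A).card + A.card = S.card := Finset.card_sdiff_add_card_eq_card hAS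
    have hsum : ∑ h ∈ Hs, (meF h \ msF h).card ≤ ∑ h ∈ Hs, (msF h \ meF h).card :=
      Finset.sum_le_sum e2
    have hA0 : A.card = 0 := by omega
    have : r₀ ∈ A := by
      simp only [hAdef, Finset.mem_filter, Finset.mem_univ, true_and]
      exact ⟨hr₀M, hr₀M', hr₀Ms⟩
    rw [Finset.card_eq_zero] at hA0
    rw [hA0] at this
    exact absurd this (Finset.notMem_empty r₀)
  -- conclude
  have hsub : {r | M' r ≠ none} ⊆ {r | N r ≠ none} := by
    intro r hr
    simp only [Set.mem_setOf_eq] at hr ⊢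
    cases hMr : M r with
    | some h => rw [hN1 r h hMr]; simp
    | none => rw [hN2 r hMr]; exact key r hMr hr
  exact Set.ncard_le_ncard hsub (Set.toFinite _)
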